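/- Suppose that for every list of 2^{n-2} nonzero vectors in F_2^{n-1} with sum zero there is a partition of F_2^{n-1} into pairs whose sums realize the list (Conjecture holds in dimension n-1). Then for any vectors v_1, ..., v_{2^{n-1}} in F_2^n (n ≥ 3) satisfying v_{2i-1} = v_{2i} for all 1 ≤ i ≤ 2^{n-2} and all v_i nonzero, there exists a partition of F_2^n into pairs (p_i, q_i), 1 ≤ i ≤ 2^{n-1}, such that p_i + q_i = v_i for all i. -/

import Mathlib

/-- A partition of `F_2^n` into `2^{n-1}` pairs `(p i, q i)`: the `2^n` vectors
`p i, q i` are pairwise distinct and cover all of `F_2^n`. -/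
def PairPartition (n : ℕ) (p q : Fin (2 ^ (n - 1)) → (Fin n → ZMod 2)) : Prop :=
  Function.Bijective (fun x : Fin (2 ^ (n - 1)) × Bool => if x.2 then p x.1 else q x.1)

/-- The pairing conjecture in `F_2^m`: any `2^{m-1}` nonzero vectors summing to zero are
the pair-sums of a partition of `F_2^m` into pairs. -/
def PairingConj (m : ℕ) : Prop :=
  ∀ v : Fin (2 ^ (m - 1)) → (Fin m → ZMod 2), (∀ i, v i ≠ 0) → ∑ i, v i = 0 →
    ∃ p q : Fin (2 ^ (m - 1)) → (Fin m → ZMod 2),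
      PairPartition m p q ∧ ∀ i, p i + q i = v i

namespace PairingAux

abbrev V (m : ℕ) := Fin (m + 3) → ZMod 2

lemma addself {m : ℕ} (x : V m) : x + x = 0 := by
  funext k
  have : ∀ a : ZMod 2, a + a = 0 := by decide
  exact this (x k)

lemma card_V (m : ℕ) : Fintype.card (V m) = 2 ^ (m + 3) := by
  simp [Fintype.card_fun]

lemma exists_not_mem {m : ℕ} (S : Finset (V m)) (h : S.card < 2 ^ (m + 3)) :
    ∃ a, a ∉ S := by
  by_contra h'
  push_neg at h'
  have hsub : (Finset.univ : Finset (V m)) ⊆ S := fun a _ => h' a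
  have := Finset.card_le_card hsub
  rw [Finset.card_univ, card_V] at this
  omega

lemma eight_le (m : ℕ) : 8 ≤ 2 ^ (m + 3) := by
  have : (2:ℕ) ^ 3 ≤ 2 ^ (m + 3) := Nat.pow_le_pow_right (by norm_num) (by omega)
  simpa using this

lemma exists_g {m : ℕ} (x1 x2 x3 x4 : V m) :
    ∃ g : V m, g ≠ x1 ∧ g ≠ x2 ∧ g ≠ x3 ∧ g ≠ x4 := by
  have hcard : ({x1, x2, x3, x4} : Finset (V m)).card < 2 ^ (m + 3) := by
    have h4 : ({x1, x2, x3, x4} : Finset (V m)).card ≤ 4 := by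
      refine le_trans (Finset.card_insert_le _ _) ?_
      refine Nat.succ_le_succ ?_
      refine le_trans (Finset.card_insert_le _ _) ?_
      refine Nat.succ_le_succ ?_
      refine le_trans (Finset.card_insert_le _ _) ?_
      exact Nat.succ_le_succ (Finset.card_singleton x4 ▸ le_refl 1)
    have := eight_le m
    omega
  obtain ⟨g, hg⟩ := exists_not_mem _ hcard
  simp only [Finset.mem_insert, Finset.mem_singleton] at hg
  push_neg at hg
  exact ⟨g, hg⟩

lemma add_eq_zero_iff {m : ℕ} (a b : V m) : a + b = 0 ↔ a = b := by
  constructor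
  · intro h
    have h2 : a + b + b = b := by rw [h, zero_add]
    rwa [add_assoc, addself, add_zero] at h2
  · intro h; rw [h, addself]

lemma fill {m N : ℕ} (u : Fin N → V m) (hu : ∀ j, u j ≠ 0) (z : V m)
    (hT : (Finset.univ.filter (fun j => u j = z)).Nonempty)
    (h1 : (Finset.univ.filter (fun j => u j = z)).card = 1 →
      (∑ j ∈ Finset.univ.filter (fun j => ¬ u j = z), u j) ≠ 0 ∧
      (∑ j ∈ Finset.univ.filter (fun j => ¬ u j = z), u j) ≠ z) :
    ∃ f : Fin N → V m, (∀ j, f j ≠ 0 ∧ f j ≠ z) ∧ (∑ j, f j = 0) ∧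
      (∀ j, u j ≠ z → f j = u j) := by
  classical
  set T : Finset (Fin N) := Finset.univ.filter (fun j => u j = z) with hTdef
  set r : V m := ∑ j ∈ Finset.univ.filter (fun j => ¬ u j = z), u j with hrdef
  have hmemT : ∀ j, j ∈ T ↔ u j = z := by
    intro j; simp [hTdef]
  rcases eq_or_lt_of_le (Nat.succ_le_of_lt (Finset.card_pos.mpr hT)) with hcard | hcard
  · -- card T = 1
    obtain ⟨hr0, hrz⟩ := h1 hcard.symm
    obtain ⟨j0, hj0⟩ := Finset.card_eq_one.mp hcard.symm
    refine ⟨Function.update u j0 r, ?_, ?_, ?_⟩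
    · intro j
      by_cases hj : j = j0
      · subst hj; simp [Function.update_self, hr0, hrz]
      · rw [Function.update_of_ne hj]
        refine ⟨hu j, ?_⟩
        intro hjz
        have : j ∈ T := (hmemT j).mpr hjz
        rw [hj0] at this
        exact hj (Finset.mem_singleton.mp this)
    · rw [← Finset.sum_filter_add_sum_filter_not Finset.univ (fun j => u j = z)]
      have hA : ∑ j ∈ T, Function.update u j0 r j = r := by
        rw [hj0, Finset.sum_singleton, Function.update_self]
      have hB : ∑ j ∈ Finset.univ.filter (fun j => ¬ u j = z), Function.update u j0 r j = r := by
        rw [hrdef]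
        refine Finset.sum_congr rfl ?_
        intro j hj
        simp only [Finset.mem_filter] at hj
        have hjz : ¬ u j = z := hj.2
        have hjj0 : j ≠ j0 := by
          intro h
          have : j0 ∈ T := hj0 ▸ Finset.mem_singleton_self j0
          exact hjz (h ▸ (hmemT j0).mp this)
        exact Function.update_of_ne hjj0 _ _
      rw [hA, hB, addself]
    · intro j hjz
      have hjj0 : j ≠ j0 := by
        intro h
        have : j0 ∈ T := hj0 ▸ Finset.mem_singleton_self j0
        exact hjz (h ▸ (hmemT j0).mp this)
      exact Function.update_of_ne hjj0 _ _
  · -- 1 < T.card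
    obtain ⟨j0, hj0T, j1, hj1T, hj01⟩ := Finset.one_lt_card.mp hcard
    obtain ⟨g, hg0, hgz, -, -⟩ := exists_g (0 : V m) z 0 z
    set S : Finset (Fin N) := (T.erase j0).erase j1 with hSdef
    set e : V m := S.card • g with hedef
    obtain ⟨x, hx0, hxz, hx1, hx2⟩ := exists_g (0 : V m) z (e + r) (e + r + z)
    have huj0 : u j0 = z := (hmemT j0).mp hj0T
    have huj1 : u j1 = z := (hmemT j1).mp hj1T
    refine ⟨fun j => if j = j0 then x else if j = j1 then e + x + r
      else if u j = z then g else u j, ?_, ?_, ?_⟩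
    · intro j
      beta_reduce
      by_cases hj : j = j0
      · simp only [hj, if_pos rfl]; exact ⟨hx0, hxz⟩
      · rw [if_neg hj]
        by_cases hj' : j = j1
        · rw [if_pos hj']
          constructor
          · intro h
            apply hx1
            have : x + (e + r) = 0 := by rw [← h]; ring
            exact (add_eq_zero_iff x (e + r)).mp this
          · intro h
            apply hx2
            have h' : x + (e + r + z) = 0 := by
              have h2 : x + (e + r + z) = (e + x + r) + z := by ring
              rw [h2, h, addself]
            exact (add_eq_zero_iff x (e + r + z)).mp h'
        · rw [if_neg hj']
          by_cases hz : u j = z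
          · rw [if_pos hz]; exact ⟨hg0, hgz⟩
          · rw [if_neg hz]; exact ⟨hu j, hz⟩
    · rw [← Finset.sum_filter_add_sum_filter_not Finset.univ (fun j => u j = z)]
      have hB : ∑ j ∈ Finset.univ.filter (fun j => ¬ u j = z),
          (if j = j0 then x else if j = j1 then e + x + r
            else if u j = z then g else u j) = r := by
        rw [hrdef]
        refine Finset.sum_congr rfl ?_
        intro j hj
        simp only [Finset.mem_filter] at hj
        have h0 : j ≠ j0 := fun h => hj.2 (h ▸ huj0)
        have h1 : j ≠ j1 := fun h => hj.2 (h ▸ huj1)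
        rw [if_neg h0, if_neg h1, if_neg hj.2]
      have hA : ∑ j ∈ T,
          (if j = j0 then x else if j = j1 then e + x + r
            else if u j = z then g else u j) = x + (e + x + r + e) := by
        rw [← Finset.add_sum_erase T _ hj0T, if_pos rfl]
        congr 1
        have hj1e : j1 ∈ T.erase j0 := Finset.mem_erase.mpr ⟨hj01.symm, hj1T⟩
        rw [← Finset.add_sum_erase _ _ hj1e, if_neg hj01.symm, if_pos rfl]
        congr 1
        have : ∀ j ∈ S, (if j = j0 then x else if j = j1 then e + x + r
            else if u j = z then g else u j) = g := by
          intro j hj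
          rw [hSdef] at hj
          have h1 : j ≠ j1 := (Finset.mem_erase.mp hj).1
          have hjT : j ∈ T.erase j0 := (Finset.mem_erase.mp hj).2
          have h0 : j ≠ j0 := (Finset.mem_erase.mp hjT).1
          have hz : u j = z := (hmemT j).mp (Finset.mem_erase.mp hjT).2
          rw [if_neg h0, if_neg h1, if_pos hz]
        rw [Finset.sum_congr rfl this, Finset.sum_const, hedef]
      rw [hA, hB]
      have : x + (e + x + r + e) + r = (x + x) + (e + e) + (r + r) := by ring
      rw [this]
      simp [addself]
    · intro j hjz
      beta_reduce
      have h0 : j ≠ j0 := fun h => hjz (h ▸ huj0)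
      have h1 : j ≠ j1 := fun h => hjz (h ▸ huj1)
      rw [if_neg h0, if_neg h1, if_neg hjz]

lemma core {m N : ℕ} (hN : 2 ≤ N) (hN' : N + 1 < 2 ^ (m + 3))
    (u : Fin N → V m) (hu : ∀ j, u j ≠ 0) :
    ∃ (z : V m) (f : Fin N → V m), z ≠ 0 ∧ (∀ j, f j ≠ 0 ∧ f j ≠ z) ∧
      (∑ j, f j = 0 ∨ ∑ j, f j = z) ∧ (∀ j, u j ≠ z → f j = u j) := by
  classical
  set s : V m := ∑ j, u j with hsdef
  by_cases hs : ∃ k, u k = s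
  · obtain ⟨k, hk⟩ := hs
    have hs0 : s ≠ 0 := fun h => hu k (hk.trans h)
    -- helper : given z with the right properties, conclude via fill
    have key : ∀ z : V m, z ≠ 0 →
        (Finset.univ.filter (fun j => u j = z)).Nonempty →
        ((Finset.univ.filter (fun j => u j = z)).card = 1 →
          (∑ j ∈ Finset.univ.filter (fun j => ¬ u j = z), u j) ≠ 0 ∧
          (∑ j ∈ Finset.univ.filter (fun j => ¬ u j = z), u j) ≠ z) →
        ∃ (z' : V m) (f : Fin N → V m), z' ≠ 0 ∧ (∀ j, f j ≠ 0 ∧ f j ≠ z') ∧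
          (∑ j, f j = 0 ∨ ∑ j, f j = z') ∧ (∀ j, u j ≠ z' → f j = u j) := by
      intro z hz hT h1
      obtain ⟨f, hf1, hf2, hf3⟩ := fill u hu z hT h1
      exact ⟨z, f, hz, hf1, Or.inl hf2, hf3⟩
    by_cases hmult : ∃ k', k' ≠ k ∧ u k' = s
    · obtain ⟨k', hk'k, hk'⟩ := hmult
      refine key s hs0 ⟨k, by simp [hk]⟩ ?_
      intro hcard
      exfalso
      have hsub : ({k, k'} : Finset (Fin N)) ⊆ Finset.univ.filter (fun j => u j = s) := by
        intro j hj
        simp only [Finset.mem_insert, Finset.mem_singleton] at hj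
        rcases hj with h | h <;> simp [h, hk, hk']
      have h2 : ({k, k'} : Finset (Fin N)).card = 2 := Finset.card_pair (Ne.symm hk'k)
      have := Finset.card_le_card hsub
      omega
    · -- s has multiplicity one; pick m0 ≠ k, z := u m0
      push_neg at hmult
      have h2N : ∃ m0 : Fin N, m0 ≠ k := by
        rcases Finset.one_lt_card.mp (show 1 < (Finset.univ : Finset (Fin N)).card by
          simp [Finset.card_univ]; omega) with ⟨a, -, b, -, hab⟩
        by_cases hak : a = k
        · exact ⟨b, fun h => hab (hak.trans h.symm)⟩
        · exact ⟨a, hak⟩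
      obtain ⟨m0, hm0k⟩ := h2N
      have hzs : u m0 ≠ s := hmult m0 hm0k
      refine key (u m0) (hu m0) ⟨m0, by simp⟩ ?_
      intro hcard
      set z := u m0 with hzdef
      obtain ⟨j0, hj0⟩ := Finset.card_eq_one.mp hcard
      -- r + z = s
      have hm0T : m0 ∈ Finset.univ.filter (fun j => u j = z) := by simp [hzdef]
      have hm0j0 : m0 = j0 := by
        rw [hj0] at hm0T; exact Finset.mem_singleton.mp hm0T
      have hfz : ∑ j ∈ Finset.univ.filter (fun j => u j = z), u j = z := by
        rw [hj0, Finset.sum_singleton, ← hm0j0]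
      have hsum : (∑ j ∈ Finset.univ.filter (fun j => ¬ u j = z), u j) + z = s := by
        have hsplit := Finset.sum_filter_add_sum_filter_not Finset.univ (fun j => u j = z) u
        rw [hfz] at hsplit
        rw [add_comm]
        exact hsplit
      constructor
      · intro h
        rw [h, zero_add] at hsum
        exact hzs hsum
      · intro h
        rw [h, addself] at hsum
        exact hs0 hsum.symm
  · push_neg at hs
    by_cases hs0 : s = 0
    · -- choose z outside the range of u and nonzero
      have hcard : (insert 0 (Finset.image u Finset.univ)).card < 2 ^ (m + 3) := by
        have h1 : (Finset.image u Finset.univ).card ≤ N := by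
          refine le_trans (Finset.card_image_le) ?_
          simp
        have := Finset.card_insert_le (0 : V m) (Finset.image u Finset.univ)
        omega
      obtain ⟨z, hz⟩ := exists_not_mem _ hcard
      simp only [Finset.mem_insert, Finset.mem_image] at hz
      push_neg at hz
      refine ⟨z, u, hz.1, ?_, Or.inl (hs0 ▸ hsdef.symm), fun j _ => rfl⟩
      intro j
      exact ⟨hu j, fun h => hz.2 j (Finset.mem_univ j) h⟩
    · -- z := s, f := u
      refine ⟨s, u, hs0, fun j => ⟨hu j, hs j⟩, Or.inr hsdef.symm, fun j _ => rfl⟩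

lemma zmod2_cases (a : ZMod 2) : a = 0 ∨ a = 1 := by
  have : ∀ a : ZMod 2, a = 0 ∨ a = 1 := by decide
  exact this a

lemma addself' {k : ℕ} (x : Fin k → ZMod 2) : x + x = 0 := by
  funext i
  have : ∀ a : ZMod 2, a + a = 0 := by decide
  exact this (x i)

def idx {m : ℕ} (i : Fin (2 ^ (m + 2))) : Fin (2 ^ (m + 1)) :=
  ⟨i.val / 2, by
    have h := i.isLt
    have h2 : (2:ℕ) ^ (m + 2) = 2 ^ (m + 1) * 2 := pow_succ 2 (m + 1)
    omega⟩

lemma lift {m : ℕ} (hconj : PairingConj (m + 2)) (z : V m) (c : Fin (m + 3)) (hzc : z c = 1)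
    (u f : Fin (2 ^ (m + 1)) → V m) (hu : ∀ j, u j ≠ 0)
    (hf1 : ∀ j, f j ≠ 0 ∧ f j ≠ z)
    (hf2 : ∑ j, f j = 0 ∨ ∑ j, f j = z)
    (hf3 : ∀ j, u j ≠ z → f j = u j) :
    ∃ p q : Fin (2 ^ (m + 2)) → V m,
      Function.Bijective
        (fun x : Fin (2 ^ (m + 2)) × Bool => if x.2 then p x.1 else q x.1) ∧
      ∀ i, p i + q i = u (idx i) := by
  classical
  have hpow : (2:ℕ) ^ (m + 2) = 2 ^ (m + 1) * 2 := pow_succ 2 (m + 1)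
  have hred : (2:ℕ) ^ (m + 2 - 1) = 2 ^ (m + 1) := rfl
  -- the projection to F_2^{m+2} with kernel {0, z}
  set ψ : V m →+ (Fin (m + 2) → ZMod 2) :=
    { toFun := fun x i => x (c.succAbove i) + x c * z (c.succAbove i)
      map_zero' := by funext i; simp
      map_add' := by intro x y; funext i; simp only [Pi.add_apply]; ring } with hψdef
  have hψapp : ∀ (x : V m) (i : Fin (m + 2)),
      ψ x i = x (c.succAbove i) + x c * z (c.succAbove i) := by
    intro x i
    rw [hψdef]
    rfl
  set σ : (Fin (m + 2) → ZMod 2) → V m := fun w => c.insertNth 0 w with hσdef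
  have hσsA : ∀ w i, σ w (c.succAbove i) = w i := by
    intro w i
    rw [hσdef]
    beta_reduce
    exact Fin.insertNth_apply_succAbove (α := fun _ => ZMod 2) c 0 w i
  have hσc : ∀ w, σ w c = 0 := by
    intro w
    rw [hσdef]
    beta_reduce
    exact Fin.insertNth_apply_same (α := fun _ => ZMod 2) c 0 w
  have hψσ : ∀ w, ψ (σ w) = w := by
    intro w; funext i
    rw [hψapp, hσsA, hσc, zero_mul, add_zero]
  have hψz : ψ z = 0 := by
    funext i
    rw [hψapp, hzc, one_mul]
    have : ∀ a : ZMod 2, a + a = 0 := by decide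
    exact this _
  have hext : ∀ x y : V m, ψ x = ψ y → x c = y c → x = y := by
    intro x y h1 h2
    funext k
    by_cases hk : k = c
    · rw [hk]; exact h2
    · obtain ⟨i, rfl⟩ := Fin.exists_succAbove_eq hk
      have h3 := congrFun h1 i
      rw [hψapp, hψapp, h2] at h3
      exact add_right_cancel h3
  have hcover : ∀ x : V m, x = σ (ψ x) ∨ x = σ (ψ x) + z := by
    intro x
    rcases zmod2_cases (x c) with h | h
    · left
      apply hext
      · rw [hψσ]
      · rw [hσc, h]
    · right
      apply hext
      · rw [map_add, hψz, add_zero, hψσ]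
      · rw [Pi.add_apply, hσc, zero_add, hzc, h]
  have hσ0 : σ 0 = 0 := by
    apply hext
    · rw [hψσ, map_zero]
    · rw [hσc]; rfl
  -- the induced vectors downstairs
  have hw0 : ∀ j, ψ (f j) ≠ 0 := by
    intro j h
    rcases hcover (f j) with h' | h'
    · exact (hf1 j).1 (by rw [h', h, hσ0])
    · exact (hf1 j).2 (by rw [h', h, hσ0, zero_add])
  have hwsum : ∑ j, ψ (f j) = 0 := by
    rcases hf2 with h | h
    · rw [← map_sum, h, map_zero]
    · rw [← map_sum, h, hψz]
  obtain ⟨P, Q, hPQ, hPQsum⟩ := hconj (fun j => ψ (f j)) hw0 hwsum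
  have hQP : ∀ j, Q j = P j + ψ (f j) := by
    intro j
    rw [← hPQsum j, ← add_assoc, addself', zero_add]
  -- the lifted pairing
  set p : Fin (2 ^ (m + 2)) → V m := fun i =>
    if i.val % 2 = 0 then σ (P (idx i))
    else (if u (idx i) = z then σ (Q (idx i)) else σ (P (idx i)) + z) with hpdef
  set q : Fin (2 ^ (m + 2)) → V m := fun i => p i + u (idx i) with hqdef
  refine ⟨p, q, ?_, fun i => by rw [hqdef, ← add_assoc, addself', zero_add]⟩
  rw [Fintype.bijective_iff_surjective_and_card]
  constructor
  · -- surjectivity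
    intro x
    obtain ⟨⟨j, bb⟩, hy⟩ := hPQ.2 (ψ x)
    have hj2 : 2 * j.val + 1 < 2 ^ (m + 2) := by have := j.isLt; omega
    set i0 : Fin (2 ^ (m + 2)) := ⟨2 * j.val, by omega⟩ with hi0
    set i1 : Fin (2 ^ (m + 2)) := ⟨2 * j.val + 1, hj2⟩ with hi1
    have hidx0 : idx i0 = j := by
      apply Fin.ext
      show (2 * j.val) / 2 = j.val
      omega
    have hidx1 : idx i1 = j := by
      apply Fin.ext
      show (2 * j.val + 1) / 2 = j.val
      omega
    have hm0 : i0.val % 2 = 0 := by show (2 * j.val) % 2 = 0; omega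
    have hm1 : ¬ (i1.val % 2 = 0) := by show ¬ ((2 * j.val + 1) % 2 = 0); omega
    have hp0 : p i0 = σ (P j) := by
      rw [hpdef]
      beta_reduce
      rw [if_pos hm0, hidx0]
    have hp1 : p i1 = if u j = z then σ (Q j) else σ (P j) + z := by
      rw [hpdef]
      beta_reduce
      rw [if_neg hm1, hidx1]
    have hq0 : q i0 = σ (P j) + u j := by
      rw [hqdef]
      beta_reduce
      rw [hp0, hidx0]
    have hq1 : q i1 = (if u j = z then σ (Q j) else σ (P j) + z) + u j := by
      rw [hqdef]
      beta_reduce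
      rw [hp1, hidx1]
    cases bb with
    | true =>
      replace hy : P j = ψ x := by simpa using hy
      rcases hcover x with hx | hx
      · refine ⟨(i0, true), ?_⟩
        show p i0 = x
        rw [hp0, hx, hy]
      · by_cases huz : u j = z
        · refine ⟨(i0, false), ?_⟩
          show q i0 = x
          rw [hq0, huz, hx, hy]
        · refine ⟨(i1, true), ?_⟩
          show p i1 = x
          rw [hp1, if_neg huz, hx, hy]
    | false =>
      replace hy : Q j = ψ x := by simpa using hy
      by_cases huz : u j = z
      · rcases hcover x with hx | hx
        · refine ⟨(i1, true), ?_⟩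
          show p i1 = x
          rw [hp1, if_pos huz, hx, hy]
        · refine ⟨(i1, false), ?_⟩
          show q i1 = x
          rw [hq1, if_pos huz, huz, hx, hy]
      · -- u j ≠ z here
        have hfj : f j = u j := hf3 j huz
        have hψu : ψ (u j) = P j + Q j := by rw [← hfj, hPQsum]
        rcases zmod2_cases (u j c) with huc | huc
        · -- σ (Q j) = σ (P j) + u j
          have hb : σ (Q j) = σ (P j) + u j := by
            apply hext
            · rw [hψσ, map_add, hψσ, hψu, ← add_assoc, addself', zero_add]
            · rw [Pi.add_apply, hσc, hσc, zero_add, huc]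
          rcases hcover x with hx | hx
          · refine ⟨(i0, false), ?_⟩
            show q i0 = x
            rw [hq0, ← hb, hx, hy]
          · refine ⟨(i1, false), ?_⟩
            show q i1 = x
            rw [hq1, if_neg huz, hx, ← hy, hb]
            ring
        · -- σ (Q j) = σ (P j) + u j + z
          have hb : σ (Q j) = σ (P j) + u j + z := by
            apply hext
            · rw [hψσ, map_add, map_add, hψσ, hψz, add_zero, hψu, ← add_assoc,
                addself', zero_add]
            · rw [Pi.add_apply, Pi.add_apply, hσc, hσc, zero_add, huc, hzc]
              decide
          rcases hcover x with hx | hx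
          · refine ⟨(i1, false), ?_⟩
            show q i1 = x
            rw [hq1, if_neg huz, hx, ← hy, hb]
            ring
          · refine ⟨(i0, false), ?_⟩
            show q i0 = x
            rw [hq0, hx, ← hy, hb]
            have h4 : σ (P j) + u j + z + z = σ (P j) + u j + (z + z) := by ring
            rw [h4, addself', add_zero]
  · -- cardinality
    simp only [Fintype.card_prod, Fintype.card_fin, Fintype.card_bool, Fintype.card_fun,
      ZMod.card]
    rw [hpow]
    ring

end PairingAux

/-- If the pairing conjecture holds in `F_2^{n-1}` (where `n ≥ 3`), then any `2^{n-1}`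
nonzero vectors in `F_2^n` with `v_{2i-1} = v_{2i}` for all `1 ≤ i ≤ 2^{n-2}` are realized
as the pair-sums of a partition of `F_2^n` into pairs. -/
theorem pairing_of_paired_values_of_conj_pred (n : ℕ) (hn : 3 ≤ n)
    (hconj : PairingConj (n - 1))
    (v : Fin (2 ^ (n - 1)) → (Fin n → ZMod 2))
    (hnz : ∀ i, v i ≠ 0)
    (hpair : ∀ (j : ℕ) (h : 2 * j + 1 < 2 ^ (n - 1)),
      v ⟨2 * j, lt_trans (Nat.lt_succ_self _) h⟩ = v ⟨2 * j + 1, h⟩) :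
    ∃ p q : Fin (2 ^ (n - 1)) → (Fin n → ZMod 2),
      PairPartition n p q ∧ ∀ i, p i + q i = v i := by
  obtain ⟨m, rfl⟩ : ∃ m, n = m + 3 := ⟨n - 3, by omega⟩
  have hconj' : PairingConj (m + 2) := hconj
  have hpow : (2:ℕ) ^ (m + 2) = 2 ^ (m + 1) * 2 := pow_succ 2 (m + 1)
  have hred : (2:ℕ) ^ (m + 3 - 1) = 2 ^ (m + 2) := rfl
  have h2le : 2 ≤ (2:ℕ) ^ (m + 1) := by
    have : (2:ℕ) ^ 1 ≤ 2 ^ (m + 1) := Nat.pow_le_pow_right (by norm_num) (by omega)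
    simpa using this
  set v' : Fin (2 ^ (m + 2)) → PairingAux.V m :=
    fun i => v ⟨i.val, by have := i.isLt; omega⟩ with hv'def
  set u : Fin (2 ^ (m + 1)) → PairingAux.V m :=
    fun j => v' ⟨2 * j.val, by have := j.isLt; omega⟩ with hudef
  have hu : ∀ j, u j ≠ 0 := by
    intro j
    rw [hudef, hv'def]
    exact hnz _
  have hN' : 2 ^ (m + 1) + 1 < 2 ^ (m + 3) := by
    have h3 : (2:ℕ) ^ (m + 3) = 2 ^ (m + 1) * 2 * 2 := by ring
    omega
  obtain ⟨z, f, hz0, hf1, hf2, hf3⟩ := PairingAux.core h2le hN' u hu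
  have hcex : ∃ c, z c ≠ 0 := by
    by_contra h
    push_neg at h
    exact hz0 (funext h)
  obtain ⟨c, hc⟩ := hcex
  have hzc : z c = 1 := by
    rcases PairingAux.zmod2_cases (z c) with h | h
    · exact absurd h hc
    · exact h
  obtain ⟨p, q, hbij, hsum⟩ := PairingAux.lift hconj' z c hzc u f hu hf1 hf2 hf3
  refine ⟨p, q, hbij, ?_⟩
  intro i
  have hival : i.val < 2 ^ (m + 3 - 1) := i.isLt
  have hs := hsum i
  rw [hs]
  simp only [hudef, hv'def, PairingAux.idx]
  have h2 : 2 * (i.val / 2) + 1 < 2 ^ (m + 3 - 1) := by omega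
  have e1 : v ⟨2 * (i.val / 2), lt_trans (Nat.lt_succ_self _) h2⟩
      = v ⟨2 * (i.val / 2) + 1, h2⟩ := hpair _ h2
  by_cases hpar : i.val % 2 = 0
  · exact congrArg v (Fin.ext (show 2 * (i.val / 2) = i.val by omega))
  · exact e1.trans (congrArg v (Fin.ext (show 2 * (i.val / 2) + 1 = i.val by omega)))
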